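/- Fix ε¹, ε² ∈ (0,1]. There exists a two-player 3×3 game in which the unique Nash equilibrium achieves the ideal welfare (w_{0} = w₊), yet for every x > 0 there is a parameter choice making the worst ε-Nash equilibrium welfare satisfy w_ε - w₋ < x. Concretely, in the game with payoffs u¹(A,A)=u²(A,A)=1, u¹(A,B)=x, u²(A,B)=1-ε², u¹(B,A)=1-ε¹, u²(B,A)=x, u¹(B,B)=(1-ε¹)x, u²(B,B)=(1-ε²)x, u¹(B,C)=x, u²(C,B)=x, and 0 elsewhere, (A,A) is the unique NE with welfare 1, while (B,B) is an ε-Nash equilibrium with welfare less than x. -/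

import Mathlib

open Finset

def IsDist {d : ℕ} (σ : Fin d → ℝ) : Prop := (∀ s, 0 ≤ σ s) ∧ ∑ s, σ s = 1

def E2 {d : ℕ} (σ1 σ2 : Fin d → ℝ) (u : Fin d → Fin d → ℝ) : ℝ :=
  ∑ s1, ∑ s2, σ1 s1 * σ2 s2 * u s1 s2

def IsNE {d : ℕ} (u1 u2 : Fin d → Fin d → ℝ) (σ1 σ2 : Fin d → ℝ) : Prop :=
  IsDist σ1 ∧ IsDist σ2 ∧
  (∀ τ : Fin d → ℝ, IsDist τ → E2 τ σ2 u1 ≤ E2 σ1 σ2 u1) ∧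
  (∀ τ : Fin d → ℝ, IsDist τ → E2 σ1 τ u2 ≤ E2 σ1 σ2 u2)

/-- Point mass on a pure strategy. -/
def pureStrat {d : ℕ} (t : Fin d) : Fin d → ℝ := fun s => if s = t then 1 else 0

lemma E2_expand (a b : Fin 3 → ℝ) (u : Fin 3 → Fin 3 → ℝ) :
    E2 a b u = a 0 * (b 0 * u 0 0 + b 1 * u 0 1 + b 2 * u 0 2)
      + a 1 * (b 0 * u 1 0 + b 1 * u 1 1 + b 2 * u 1 2)
      + a 2 * (b 0 * u 2 0 + b 1 * u 2 1 + b 2 * u 2 2) := by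
  simp [E2, Fin.sum_univ_three]; ring

lemma pure0 : pureStrat (0 : Fin 3) = ![1,0,0] := by
  funext s; fin_cases s <;> simp [pureStrat]
lemma pure1 : pureStrat (1 : Fin 3) = ![0,1,0] := by
  funext s; fin_cases s <;> simp [pureStrat]
lemma pure2 : pureStrat (2 : Fin 3) = ![0,0,1] := by
  funext s; fin_cases s <;> simp [pureStrat]

lemma pure_isDist {d : ℕ} (t : Fin d) : IsDist (pureStrat t) := by
  constructor
  · intro s; unfold pureStrat; positivity
  · simp [pureStrat]

set_option maxHeartbeats 1000000 in
theorem stmt9 (ε1 ε2 : ℝ) (hε1 : 0 < ε1 ∧ ε1 ≤ 1) (hε2 : 0 < ε2 ∧ ε2 ≤ 1)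
    (x : ℝ) (hx : 0 < x) (hx1 : x ≤ 1) :
    let u1 : Fin 3 → Fin 3 → ℝ :=
      ![![1, x, 0], ![1 - ε1, (1 - ε1) * x, x], ![0, 0, 0]]
    let u2 : Fin 3 → Fin 3 → ℝ :=
      ![![1, 1 - ε2, 0], ![x, (1 - ε2) * x, 0], ![0, x, 0]]
    -- (A,A) is a Nash equilibrium, and it is unique
    IsNE u1 u2 (pureStrat 0) (pureStrat 0) ∧
    (∀ τ1 τ2 : Fin 3 → ℝ, IsNE u1 u2 τ1 τ2 → τ1 = pureStrat 0 ∧ τ2 = pureStrat 0) ∧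
    -- the unique NE achieves the ideal welfare: w(A,A) = w₊
    (u1 0 0 + u2 0 0) / 2 =
      (Finset.univ.sup' ⟨(0 : Fin 3 × Fin 3), Finset.mem_univ _⟩
          (fun p : Fin 3 × Fin 3 => u1 p.1 p.2) +
        Finset.univ.sup' ⟨(0 : Fin 3 × Fin 3), Finset.mem_univ _⟩
          (fun p : Fin 3 × Fin 3 => u2 p.1 p.2)) / 2 ∧
    -- (B,B) is an ε-Nash equilibrium: each player plays an εⁱ-best response
    (u1 1 1 ≥ Finset.univ.inf' ⟨(0 : Fin 3), Finset.mem_univ _⟩ (fun t => u1 t 1) +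
      (1 - ε1) * (Finset.univ.sup' ⟨(0 : Fin 3), Finset.mem_univ _⟩ (fun t => u1 t 1) -
        Finset.univ.inf' ⟨(0 : Fin 3), Finset.mem_univ _⟩ (fun t => u1 t 1))) ∧
    (u2 1 1 ≥ Finset.univ.inf' ⟨(0 : Fin 3), Finset.mem_univ _⟩ (fun t => u2 1 t) +
      (1 - ε2) * (Finset.univ.sup' ⟨(0 : Fin 3), Finset.mem_univ _⟩ (fun t => u2 1 t) -
        Finset.univ.inf' ⟨(0 : Fin 3), Finset.mem_univ _⟩ (fun t => u2 1 t))) ∧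
    -- and (B,B) has welfare less than x
    (u1 1 1 + u2 1 1) / 2 < x := by
  obtain ⟨hε1p, hε1le⟩ := hε1
  obtain ⟨hε2p, hε2le⟩ := hε2
  intro u1 u2
  have hu1 : u1 = ![![1, x, 0], ![1 - ε1, (1 - ε1) * x, x], ![0, 0, 0]] := rfl
  have hu2 : u2 = ![![1, 1 - ε2, 0], ![x, (1 - ε2) * x, 0], ![0, x, 0]] := rfl
  have key1 : ∀ a b : Fin 3 → ℝ, E2 a b u1 =
      a 0 * (b 0 + x * b 1) + a 1 * ((1 - ε1) * b 0 + (1 - ε1) * x * b 1 + x * b 2) := by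
    intro a b
    rw [E2_expand, hu1]
    norm_num [Matrix.cons_val_zero, Matrix.cons_val_one, Matrix.cons_val_two,
      Matrix.head_cons, Matrix.tail_cons, Matrix.vecHead, Matrix.vecTail]
    ring
  have key2 : ∀ a b : Fin 3 → ℝ, E2 a b u2 =
      b 0 * (a 0 + x * a 1) + b 1 * ((1 - ε2) * a 0 + (1 - ε2) * x * a 1 + x * a 2) := by
    intro a b
    rw [E2_expand, hu2]
    norm_num [Matrix.cons_val_zero, Matrix.cons_val_one, Matrix.cons_val_two,
      Matrix.head_cons, Matrix.tail_cons, Matrix.vecHead, Matrix.vecTail]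
    ring
  refine ⟨?_, ?_, ?_, ?_, ?_, ?_⟩
  · -- (A,A) is NE
    refine ⟨pure_isDist _, pure_isDist _, ?_, ?_⟩
    · intro τ hτ
      obtain ⟨hτn, hτs⟩ := hτ
      rw [Fin.sum_univ_three] at hτs
      rw [key1, key1, pure0]
      norm_num [Matrix.cons_val_two, Matrix.tail_cons, Matrix.head_cons]
      nlinarith [hτn 0, hτn 1, hτn 2]
    · intro τ hτ
      obtain ⟨hτn, hτs⟩ := hτ
      rw [Fin.sum_univ_three] at hτs
      rw [key2, key2, pure0]
      norm_num [Matrix.cons_val_two, Matrix.tail_cons, Matrix.head_cons]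
      nlinarith [hτn 0, hτn 1, hτn 2]
  · -- uniqueness
    intro τ1 τ2 ⟨⟨hp, hps⟩, ⟨hq, hqs⟩, hB1, hB2⟩
    rw [Fin.sum_univ_three] at hps hqs
    have e10 := hB1 (pureStrat 0) (pure_isDist _)
    have e11 := hB1 (pureStrat 1) (pure_isDist _)
    have e12 := hB1 (pureStrat 2) (pure_isDist _)
    have e20 := hB2 (pureStrat 0) (pure_isDist _)
    have e21 := hB2 (pureStrat 1) (pure_isDist _)
    have e22 := hB2 (pureStrat 2) (pure_isDist _)
    rw [key1, key1, pure0] at e10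
    rw [key1, key1, pure1] at e11
    rw [key1, key1, pure2] at e12
    rw [key2, key2, pure0] at e20
    rw [key2, key2, pure1] at e21
    rw [key2, key2, pure2] at e22
    norm_num at e10 e11 e12 e20 e21 e22
    -- expected value for player 1 is nonneg (from e12)
    -- Step 1: τ1 2 = 0
    have hp2 : τ1 2 = 0 := by
      by_contra h
      have hp2pos : 0 < τ1 2 := lt_of_le_of_ne (hp 2) (Ne.symm h)
      -- value V1 ≤ 0
      have hV1 : τ1 0 * (τ2 0 + x * τ2 1)
          + τ1 1 * ((1 - ε1) * τ2 0 + (1 - ε1) * x * τ2 1 + x * τ2 2) ≤ 0 := by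
        nlinarith [mul_le_mul_of_nonneg_left e10 (hp 0),
          mul_le_mul_of_nonneg_left e11 (hp 1), e12]
      have hq0 : τ2 0 = 0 := by nlinarith [hq 0, hq 1, e10, e12]
      have hq1 : τ2 1 = 0 := by nlinarith [hq 0, hq 1, e10, e12]
      have hq2 : τ2 2 = 1 := by linarith
      nlinarith [e11, e12]
    have hq2 : τ2 2 = 0 := by
      by_contra h
      have hq2pos : 0 < τ2 2 := lt_of_le_of_ne (hq 2) (Ne.symm h)
      have hV2 : τ2 0 * (τ1 0 + x * τ1 1)
          + τ2 1 * ((1 - ε2) * τ1 0 + (1 - ε2) * x * τ1 1 + x * τ1 2) ≤ 0 := by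
        nlinarith [mul_le_mul_of_nonneg_left e20 (hq 0),
          mul_le_mul_of_nonneg_left e21 (hq 1), e22]
      have hp0 : τ1 0 = 0 := by nlinarith [hp 0, hp 1, e20, e22]
      have hp1 : τ1 1 = 0 := by nlinarith [hp 0, hp 1, e20, e22]
      have hp2' : τ1 2 = 1 := by linarith
      nlinarith [e21, e22]
    -- Step 2: with no weight on the third strategy, row/col 0 is strictly better
    have hr : x ≤ τ2 0 + x * τ2 1 := by nlinarith [hq 0, hq 1]
    have hp1 : τ1 1 = 0 := by nlinarith [e10, hp 1, mul_pos hε1p (lt_of_lt_of_le hx hr)]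
    have hc : x ≤ τ1 0 + x * τ1 1 := by nlinarith [hp 0, hp 1]
    have hq1 : τ2 1 = 0 := by nlinarith [e20, hq 1, mul_pos hε2p (lt_of_lt_of_le hx hc)]
    have hp0 : τ1 0 = 1 := by linarith
    have hq0 : τ2 0 = 1 := by linarith
    constructor
    · rw [pure0]; funext s; fin_cases s <;> simp [hp0, hp1, hp2]
    · rw [pure0]; funext s; fin_cases s <;> simp [hq0, hq1, hq2]
  · -- welfare of (A,A) equals ideal welfare
    have hs1 : Finset.univ.sup' ⟨(0 : Fin 3 × Fin 3), Finset.mem_univ _⟩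
        (fun p : Fin 3 × Fin 3 => u1 p.1 p.2) = 1 := by
      apply le_antisymm
      · apply Finset.sup'_le
        intro p _
        fin_cases p <;> norm_num [hu1] <;> nlinarith
      · have := Finset.le_sup' (fun p : Fin 3 × Fin 3 => u1 p.1 p.2)
          (Finset.mem_univ ((0 : Fin 3), (0 : Fin 3)))
        simpa [hu1] using this
    have hs2 : Finset.univ.sup' ⟨(0 : Fin 3 × Fin 3), Finset.mem_univ _⟩
        (fun p : Fin 3 × Fin 3 => u2 p.1 p.2) = 1 := by
      apply le_antisymm
      · apply Finset.sup'_le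
        intro p _
        fin_cases p <;> norm_num [hu2] <;> nlinarith
      · have := Finset.le_sup' (fun p : Fin 3 × Fin 3 => u2 p.1 p.2)
          (Finset.mem_univ ((0 : Fin 3), (0 : Fin 3)))
        simpa [hu2] using this
    rw [hs1, hs2]
    norm_num [hu1, hu2]
  · -- player 1 plays an ε1-best response at (B,B)
    have hinf : Finset.univ.inf' ⟨(0 : Fin 3), Finset.mem_univ _⟩ (fun t => u1 t 1) = 0 := by
      apply le_antisymm
      · have := Finset.inf'_le (fun t : Fin 3 => u1 t 1) (Finset.mem_univ (2 : Fin 3))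
        simpa [hu1] using this
      · apply Finset.le_inf'
        intro t _
        fin_cases t <;> norm_num [hu1] <;> nlinarith
    have hsup : Finset.univ.sup' ⟨(0 : Fin 3), Finset.mem_univ _⟩ (fun t => u1 t 1) = x := by
      apply le_antisymm
      · apply Finset.sup'_le
        intro t _
        fin_cases t <;> norm_num [hu1] <;> nlinarith
      · have := Finset.le_sup' (fun t : Fin 3 => u1 t 1) (Finset.mem_univ (0 : Fin 3))
        simpa [hu1] using this
    rw [hinf, hsup]
    norm_num [hu1]
  · -- player 2 plays an ε2-best response at (B,B)
    have hinf : Finset.univ.inf' ⟨(0 : Fin 3), Finset.mem_univ _⟩ (fun t => u2 1 t) = 0 := by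
      apply le_antisymm
      · have := Finset.inf'_le (fun t : Fin 3 => u2 1 t) (Finset.mem_univ (2 : Fin 3))
        simpa [hu2] using this
      · apply Finset.le_inf'
        intro t _
        fin_cases t <;> norm_num [hu2] <;> nlinarith
    have hsup : Finset.univ.sup' ⟨(0 : Fin 3), Finset.mem_univ _⟩ (fun t => u2 1 t) = x := by
      apply le_antisymm
      · apply Finset.sup'_le
        intro t _
        fin_cases t <;> norm_num [hu2] <;> nlinarith
      · have := Finset.le_sup' (fun t : Fin 3 => u2 1 t) (Finset.mem_univ (0 : Fin 3))
        simpa [hu2] using this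
    rw [hinf, hsup]
    norm_num [hu2]
  · -- welfare of (B,B) is less than x
    norm_num [hu1, hu2]
    nlinarith
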